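/- arXiv:1701.06400 — 2 statements merged into one kernel-verified Lean document; each statement's English description precedes it below -/
import Mathlib

section
/- Let G be a finite graph with n vertices and m edges, and let L(G) be its line graph. Then the characteristic polynomial of the adjacency matrix of L(G) satisfies P_{A(L(G))}(x) = (x+2)^{m−n} · P_{Q(G)}(x+2), where Q(G) = D(G) + A(G) is the signless Laplacian of G. -/
open Polynomial

variable {V : Type*}

/-- The signless Laplacian `Q(G) = D(G) + A(G)` of a graph. -/
def signlessLaplacian (G : SimpleGraph V) [Fintype V] [DecidableEq V] [DecidableRel G.Adj] :
    Matrix V V ℝ :=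
  Matrix.diagonal (fun v => (G.degree v : ℝ)) + G.adjMatrix ℝ

instance lineGraphAdjDecidable (G : SimpleGraph V) [Fintype V] [DecidableEq V]
    [DecidableRel G.Adj] : DecidableRel G.lineGraph.Adj :=
  fun _ _ => decidable_of_iff _ SimpleGraph.lineGraph_adj_iff_exists.symm

open Matrix Finset

section Aux
set_option linter.unusedSectionVars false
variable {m n : Type*} [Fintype m] [Fintype n] [DecidableEq m] [DecidableEq n]

private lemma smul_one_sub_mul_eq {K : Type*} [Field K] {t : K} (ht : t ≠ 0)
    (A : Matrix m n K) (B : Matrix n m K) :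
    t • (1 : Matrix m m K) - A * B = t • (1 + (-(t⁻¹) • A) * B) := by
  rw [smul_add, Matrix.smul_mul, smul_smul, mul_neg, mul_inv_cancel₀ ht, neg_smul,
    one_smul, ← sub_eq_add_neg]

private lemma det_key {K : Type*} [Field K] (t : K) (ht : t ≠ 0)
    (A : Matrix m n K) (B : Matrix n m K) :
    (t • 1 - A * B).det * t ^ Fintype.card n =
      (t • 1 - B * A).det * t ^ Fintype.card m := by
  have h3 : B * (-(t⁻¹) • A) = (-(t⁻¹) • B) * A := by
    rw [Matrix.mul_smul, Matrix.smul_mul]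
  rw [smul_one_sub_mul_eq ht A B, smul_one_sub_mul_eq ht B A, det_smul, det_smul, ← h3]
  have h2 : ((1 : Matrix m m K) + (-(t⁻¹) • A) * B).det
      = ((1 : Matrix n n K) + B * (-(t⁻¹) • A)).det := by
    rw [add_comm, add_comm (1 : Matrix n n K)]
    exact Matrix.det_mul_add_one_comm _ _
  rw [h2]
  ring

private lemma charmatrix_map_ringHom {R : Type*} [CommRing R] (M : Matrix n n R)
    {K : Type*} [CommRing K] (φ : R[X] →+* K) :
    (charmatrix M).map φ = φ X • 1 - M.map (φ.comp C) := by
  ext i j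
  by_cases h : i = j
  · subst h
    simp [charmatrix_apply_eq, Matrix.one_apply]
  · simp [charmatrix_apply_ne _ _ _ h, Matrix.one_apply_ne h]

private lemma charpoly_ringHom {R : Type*} [CommRing R] (M : Matrix n n R)
    {K : Type*} [CommRing K] (φ : R[X] →+* K) :
    φ M.charpoly = (φ X • 1 - M.map (φ.comp C)).det := by
  rw [Matrix.charpoly, RingHom.map_det, RingHom.mapMatrix_apply, charmatrix_map_ringHom]

lemma charpoly_mul_X_pow {F : Type*} [Field F] (A : Matrix m n F) (B : Matrix n m F) :
    (A * B).charpoly * X ^ Fintype.card n = (B * A).charpoly * X ^ Fintype.card m := by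
  set K := FractionRing F[X]
  have φinj : Function.Injective (algebraMap F[X] K) := IsFractionRing.injective _ _
  apply φinj
  set φ := algebraMap F[X] K
  have ht : φ X ≠ 0 := fun h => X_ne_zero (φinj (h.trans (map_zero φ).symm))
  rw [_root_.map_mul, _root_.map_mul, map_pow, map_pow, charpoly_ringHom, charpoly_ringHom,
    Matrix.map_mul, Matrix.map_mul, det_key _ ht]
variable {n : Type*} [Fintype n] [DecidableEq n]

lemma charpoly_add_smul_one_comp {R : Type*} [CommRing R] (M : Matrix n n R) (c : R) :
    (M + c • 1).charpoly.comp (X + C c) = M.charpoly := by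
  let f : R[X] →+* R[X] := eval₂RingHom C (X + C c)
  have hcomp : (M + c • 1).charpoly.comp (X + C c) = f (M + c • 1).charpoly := rfl
  rw [hcomp, Matrix.charpoly, Matrix.charpoly, RingHom.map_det, RingHom.mapMatrix_apply]
  congr 1
  ext i j
  by_cases h : i = j
  · subst h
    simp [f, charmatrix_apply_eq, Matrix.one_apply]
  · simp [f, charmatrix_apply_ne _ _ _ h, Matrix.one_apply_ne h]

variable (G : SimpleGraph V) [Fintype V] [DecidableEq V] [DecidableRel G.Adj]
/-- The vertex-edge incidence matrix of a graph. -/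
def incMatrix' : Matrix V G.edgeSet ℝ :=
  fun v e => if v ∈ (e : Sym2 V) then 1 else 0

lemma incMatrix'_mul_transpose : incMatrix' G * (incMatrix' G)ᵀ = signlessLaplacian G := by
  ext u v
  rw [Matrix.mul_apply]
  have : ∀ e : G.edgeSet, incMatrix' G u e * (incMatrix' G)ᵀ e v
      = if u ∈ (e : Sym2 V) ∧ v ∈ (e : Sym2 V) then (1 : ℝ) else 0 := by
    intro e
    by_cases h1 : u ∈ (e : Sym2 V) <;> by_cases h2 : v ∈ (e : Sym2 V) <;>
      simp [incMatrix', h1, h2]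
  rw [Finset.sum_congr rfl fun e _ => this e]
  rw [Finset.sum_boole]
  have hsub : (Finset.univ.filter fun e : G.edgeSet => u ∈ (e : Sym2 V) ∧ v ∈ (e : Sym2 V)).card
      = (G.edgeFinset.filter fun e => u ∈ e ∧ v ∈ e).card := by
    refine Finset.card_nbij (i := fun e => (e : Sym2 V)) ?_ ?_ ?_
    · intro e he
      simp only [Finset.coe_filter, Finset.mem_coe, Finset.mem_filter, Finset.mem_univ, true_and,
        Set.mem_setOf_eq] at he
      simp [SimpleGraph.mem_edgeFinset, e.2, he]
    · intro e he f hf hef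
      exact Subtype.ext hef
    · intro e he
      simp only [Finset.coe_filter, SimpleGraph.mem_edgeFinset, Set.mem_setOf_eq] at he
      exact ⟨⟨e, he.1⟩, by simp [he.2.1, he.2.2], rfl⟩
  rw [hsub]
  by_cases huv : u = v
  · subst huv
    have : (G.edgeFinset.filter fun e => u ∈ e ∧ u ∈ e) = G.incidenceFinset u := by
      rw [SimpleGraph.incidenceFinset_eq_filter]
      simp
    rw [this, SimpleGraph.card_incidenceFinset_eq_degree]
    simp [signlessLaplacian, Matrix.diagonal_apply_eq]
  · by_cases hadj : G.Adj u v
    · have : (G.edgeFinset.filter fun e => u ∈ e ∧ v ∈ e) = {s(u, v)} := by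
        ext e
        simp only [Finset.mem_filter, SimpleGraph.mem_edgeFinset, Finset.mem_singleton]
        constructor
        · rintro ⟨-, hu, hv⟩
          exact (Sym2.mem_and_mem_iff huv).mp ⟨hu, hv⟩
        · rintro rfl
          simp [hadj]
      rw [this]
      simp [signlessLaplacian, Matrix.diagonal_apply_ne _ huv, hadj]
    · have : (G.edgeFinset.filter fun e => u ∈ e ∧ v ∈ e) = ∅ := by
        ext e
        simp only [Finset.mem_filter, SimpleGraph.mem_edgeFinset, Finset.notMem_empty,
          iff_false, not_and]
        intro he hu hv
        exact hadj (((Sym2.mem_and_mem_iff huv).mp ⟨hu, hv⟩ ▸ he :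
          s(u, v) ∈ G.edgeSet))
      rw [this]
      simp [signlessLaplacian, Matrix.diagonal_apply_ne _ huv, hadj]

lemma transpose_mul_incMatrix' :
    (incMatrix' G)ᵀ * incMatrix' G = G.lineGraph.adjMatrix ℝ + (2 : ℝ) • 1 := by
  ext e f
  rw [Matrix.mul_apply]
  have : ∀ v, (incMatrix' G)ᵀ e v * incMatrix' G v f
      = if v ∈ (e : Sym2 V) ∧ v ∈ (f : Sym2 V) then (1 : ℝ) else 0 := by
    intro v
    by_cases h1 : v ∈ (e : Sym2 V) <;> by_cases h2 : v ∈ (f : Sym2 V) <;>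
      simp [incMatrix', h1, h2]
  rw [Finset.sum_congr rfl fun v _ => this v, Finset.sum_boole]
  by_cases hef : e = f
  · subst hef
    obtain ⟨z, hz⟩ := e
    induction z using Sym2.ind with
    | _ a b =>
      have hab : a ≠ b := G.ne_of_adj hz
      have hfil : (Finset.univ.filter fun v => v ∈ s(a, b) ∧ v ∈ s(a, b)) = {a, b} := by
        ext v
        simp [Sym2.mem_iff]
      simp only [hfil, Finset.card_pair hab]
      simp [Matrix.one_apply_eq]
  · by_cases hadj : G.lineGraph.Adj e f
    · obtain ⟨hne, x, hx1, hx2⟩ := SimpleGraph.lineGraph_adj_iff_exists.mp hadj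
      have : (Finset.univ.filter fun v => v ∈ (e : Sym2 V) ∧ v ∈ (f : Sym2 V)) = {x} := by
        ext v
        simp only [Finset.mem_filter, Finset.mem_univ, true_and, Finset.mem_singleton]
        constructor
        · rintro ⟨hv1, hv2⟩
          by_contra hvx
          exact hef (Subtype.ext (Sym2.eq_of_ne_mem hvx hv1 hx1 hv2 hx2))
        · rintro rfl; exact ⟨hx1, hx2⟩
      rw [this]
      simp [hadj, Matrix.one_apply_ne hef, SimpleGraph.adjMatrix]
    · have : (Finset.univ.filter fun v => v ∈ (e : Sym2 V) ∧ v ∈ (f : Sym2 V)) = ∅ := by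
        ext v
        simp only [Finset.mem_filter, Finset.mem_univ, true_and, Finset.notMem_empty,
          iff_false, not_and]
        intro hv1 hv2
        exact hadj (SimpleGraph.lineGraph_adj_iff_exists.mpr ⟨hef, v, hv1, hv2⟩)
      rw [this]
      simp [hadj, Matrix.one_apply_ne hef]

end Aux

/-- For a graph `G` with `n` vertices and `m` edges,
`P_{A(L(G))}(x) = (x+2)^{m-n} · P_{Q(G)}(x+2)`  (stated multiplied through by `(x+2)^n`,
so that it also makes sense when `m < n`). -/
theorem lineGraph_charpoly (G : SimpleGraph V) [Fintype V] [DecidableEq V]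
    [DecidableRel G.Adj] (n m : ℕ) (hn : n = Fintype.card V) (hm : m = G.edgeFinset.card) :
    (G.lineGraph.adjMatrix ℝ).charpoly * (X + 2) ^ n =
      ((signlessLaplacian G).charpoly.comp (X + 2)) * (X + 2) ^ m := by
  subst hn hm
  rw [SimpleGraph.edgeFinset_card]
  have key := charpoly_mul_X_pow (incMatrix' G) (incMatrix' G)ᵀ
  rw [incMatrix'_mul_transpose, transpose_mul_incMatrix'] at key
  have hf := congrArg (eval₂RingHom Polynomial.C (X + C (2 : ℝ))) key
  have hcomp : ∀ p : ℝ[X], eval₂RingHom Polynomial.C (X + C (2 : ℝ)) p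
      = p.comp (X + C (2 : ℝ)) := fun p => rfl
  rw [_root_.map_mul, _root_.map_mul, map_pow, map_pow] at hf
  simp only [hcomp, X_comp] at hf
  rw [charpoly_add_smul_one_comp] at hf
  have h2 : (X + 2 : ℝ[X]) = X + C (2 : ℝ) := by rw [map_ofNat]
  rw [h2]
  exact hf.symm
end

section
/- Let G be a finite graph with n vertices and m edges, and let S(G) be its subdivision graph. Then P_{A(S(G))}(x) = x^{m−n} · P_{Q(G)}(x²), where Q(G) is the signless Laplacian of G. -/
open Polynomial Matrix

variable {V : Type*}

/-- The subdivision graph `S(G)` of a graph `G`: each edge `uv` is replaced by a path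
`u - w_{uv} - v` through a new vertex `w_{uv}`.  Its vertex set is `V ⊕ G.edgeSet`, an
original vertex being adjacent exactly to the new vertices of the edges containing it. -/
def subdivision (G : SimpleGraph V) : SimpleGraph (V ⊕ G.edgeSet) where
  Adj x y :=
    match x, y with
    | Sum.inl v, Sum.inr e => v ∈ (e : Sym2 V)
    | Sum.inr e, Sum.inl v => v ∈ (e : Sym2 V)
    | _, _ => False
  symm := by constructor; rintro (v | e) (w | f) h <;> simp_all
  loopless := by constructor; rintro (v | e) h <;> simp_all

instance subdivisionAdjDecidable (G : SimpleGraph V) [DecidableEq V] :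
    DecidableRel (subdivision G).Adj := by
  rintro (v | e) (w | f) <;> simp only [subdivision] <;> infer_instance

noncomputable def bmat (G : SimpleGraph V) [Fintype V] [DecidableEq V] [DecidableRel G.Adj] :
    Matrix V G.edgeSet ℝ[X] := fun v e => if v ∈ (e : Sym2 V) then 1 else 0

lemma bmat_mul_transpose (G : SimpleGraph V) [Fintype V] [DecidableEq V] [DecidableRel G.Adj] :
    bmat G * (bmat G)ᵀ = (signlessLaplacian G).map C := by
  refine Matrix.ext fun v w => ?_
  simp only [mul_apply, bmat, transpose_apply, map_apply, signlessLaplacian, Matrix.add_apply,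
    diagonal_apply, SimpleGraph.adjMatrix_apply, ite_mul, one_mul, zero_mul]
  by_cases h : v = w
  · subst h
    have hdeg : G.degree v = Fintype.card {e : G.edgeSet // v ∈ (e : Sym2 V)} := by
      rw [← SimpleGraph.card_incidenceFinset_eq_degree, SimpleGraph.incidenceFinset,
        Set.toFinset_card]
      exact Fintype.card_congr ((Equiv.subtypeSubtypeEquivSubtypeInter _ _).symm)
    simp only [if_pos rfl, SimpleGraph.irrefl, if_false, add_zero, ite_self]
    have collapse : ∀ x : G.edgeSet,
        (if v ∈ (x : Sym2 V) then if v ∈ (x : Sym2 V) then (1:ℝ[X]) else 0 else 0)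
          = if v ∈ (x : Sym2 V) then (1:ℝ[X]) else 0 := fun x => by
      by_cases hx : v ∈ (x : Sym2 V) <;> simp [hx]
    rw [Finset.sum_congr rfl fun x _ => collapse x, Finset.sum_boole, hdeg, Fintype.card_subtype,
      if_pos trivial]
    simp [map_natCast]
  · have hne : v ≠ w := h
    simp only [if_neg h, zero_add]
    have key : ∀ e : G.edgeSet,
        (if v ∈ (e : Sym2 V) then (if w ∈ (e : Sym2 V) then (1:ℝ[X]) else 0) else 0)
          = if (e : Sym2 V) = s(v, w) then 1 else 0 := by
      intro e
      by_cases h1 : v ∈ (e : Sym2 V) <;> by_cases h2 : w ∈ (e : Sym2 V) <;>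
        simp only [h1, h2, if_true, if_false] <;>
        rw [eq_comm] <;>
        simp [← Sym2.mem_and_mem_iff hne, h1, h2]
    rw [Finset.sum_congr rfl (fun e _ => key e)]
    by_cases hadj : G.Adj v w
    · have : ∀ e : G.edgeSet, ((e : Sym2 V) = s(v, w)) ↔ (e = ⟨s(v, w), hadj⟩) := by
        intro e; rw [Subtype.ext_iff]
      simp only [this]
      rw [Finset.sum_ite_eq' Finset.univ (⟨s(v,w), hadj⟩ : G.edgeSet) (fun _ => (1:ℝ[X]))]
      simp [hadj]
    · rw [Finset.sum_eq_zero, if_neg hadj, map_zero]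
      intro e _
      rw [if_neg]
      intro hc
      exact hadj (by rw [← SimpleGraph.mem_edgeSet, ← hc]; exact e.2)

/-- For a graph `G` with `n` vertices and `m` edges,
`P_{A(S(G))}(x) = x^{m-n} · P_{Q(G)}(x²)`  (stated multiplied through by `x^n`,
so that it also makes sense when `m < n`). -/
theorem subdivision_charpoly (G : SimpleGraph V) [Fintype V] [DecidableEq V]
    [DecidableRel G.Adj] (n m : ℕ) (hn : n = Fintype.card V) (hm : m = G.edgeFinset.card) :
    ((subdivision G).adjMatrix ℝ).charpoly * X ^ n =
      ((signlessLaplacian G).charpoly.comp (X ^ 2)) * X ^ m := by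
  classical
  set b := bmat G with hb
  set DV : Matrix V V ℝ[X] := Matrix.diagonal fun _ => (X : ℝ[X]) with hDV
  set DE : Matrix G.edgeSet G.edgeSet ℝ[X] := Matrix.diagonal fun _ => (X : ℝ[X]) with hDE
  have hchar : charmatrix ((subdivision G).adjMatrix ℝ) = fromBlocks DV (-b) (-bᵀ) DE := by
    refine Matrix.ext ?_
    rintro (v | e) (w | f) <;>
      simp only [charmatrix_apply, SimpleGraph.adjMatrix_apply, apply_ite (Polynomial.C (R := ℝ)),
        map_one, map_zero] <;>
      simp [charmatrix_apply, hb, bmat, hDV, hDE, subdivision, diagonal_apply,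
        SimpleGraph.adjMatrix_apply, apply_ite (Polynomial.C (R := ℝ)), Sum.inl.injEq,
        Sum.inr.injEq, Subtype.ext_iff]
  have hmul : fromBlocks DV (-b) (-bᵀ) DE * fromBlocks DV 0 bᵀ 1
      = fromBlocks (DV * DV - b * bᵀ) (-b) 0 DE := by
    rw [fromBlocks_multiply]
    have h11 : DV * DV + -b * bᵀ = DV * DV - b * bᵀ := by
      rw [Matrix.neg_mul, ← sub_eq_add_neg]
    have h12 : DV * (0 : Matrix V G.edgeSet ℝ[X]) + -b * (1 : Matrix G.edgeSet G.edgeSet ℝ[X])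
        = -b := by rw [Matrix.mul_zero, Matrix.mul_one, zero_add]
    have h21 : -bᵀ * DV + DE * bᵀ = (0 : Matrix G.edgeSet V ℝ[X]) := by
      refine Matrix.ext fun i j => ?_
      simp [hDV, hDE, mul_diagonal, diagonal_mul, mul_comm]
    have h22 : -bᵀ * (0 : Matrix V G.edgeSet ℝ[X]) + DE * (1 : Matrix G.edgeSet G.edgeSet ℝ[X])
        = DE := by rw [Matrix.mul_zero, Matrix.mul_one, zero_add]
    rw [h11, h12, h21, h22]
  have hdetDV : DV.det = X ^ n := by
    simp [hDV, det_diagonal, hn, Finset.card_univ]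
  have hdetDE : DE.det = X ^ m := by
    simp only [hDE, det_diagonal, Finset.prod_const, Finset.card_univ]
    rw [hm, SimpleGraph.edgeFinset, Set.toFinset_card]
  have hQ : (DV * DV - b * bᵀ).det = (signlessLaplacian G).charpoly.comp (X ^ 2) := by
    have hcomp : (signlessLaplacian G).charpoly.comp (X ^ 2)
        = eval₂RingHom Polynomial.C ((X : ℝ[X]) ^ 2) (signlessLaplacian G).charpoly := rfl
    rw [hcomp, Matrix.charpoly, RingHom.map_det]
    congr 1
    refine Matrix.ext fun i j => ?_
    rw [bmat_mul_transpose]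
    simp [charmatrix_apply, hDV, diagonal_mul_diagonal, diagonal_apply, apply_ite
      (eval₂RingHom Polynomial.C ((X : ℝ[X]) ^ 2)), Matrix.map_apply, Matrix.sub_apply]
    split_ifs <;> simp [sq]
  have key := congrArg Matrix.det hmul
  rw [det_mul, det_fromBlocks_zero₁₂, det_fromBlocks_zero₂₁, det_one, mul_one, hdetDV,
    hdetDE, hQ] at key
  rw [Matrix.charpoly, hchar]
  exact key
end
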